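/- For every positive integer m, the center of the group Ex_m is exactly the four-element set {(0,0,+1), (0,0,−1), (0,𝟙,+1), (0,𝟙,−1)}, where 0 denotes the zero vector and 𝟙 the all-ones vector in (ℤ/2ℤ)^m. -/

import Mathlib

open Finset

/-- The excess group `Ex_m`: triples `(v, h, ε)` with `v, h ∈ (ℤ/2ℤ)^m`,
`ε ∈ {±1}` (realized as `ℤˣ`), and the coordinates of `v` summing to `0`. -/
@[ext]
structure Ex (m : ℕ) where
  v : Fin m → ZMod 2
  h : Fin m → ZMod 2
  ε : ℤˣ
  hv : ∑ i, v i = 0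

namespace Ex

variable {m : ℕ}

/-- The exponent of `(−1)` in the product `(v,h,ε)·(v',h',ε')`:
`Σ_{1≤i<j≤m} v_j (v'_i + h'_i) + Σ_{1≤i≤j≤m} v'_j h_i`, computed from the
representatives in `{0,1}` of the `ℤ/2ℤ`-coordinates. -/
def expo (x y : Ex m) : ℕ :=
  (∑ p ∈ Finset.univ.filter (fun p : Fin m × Fin m => p.1 < p.2),
      (x.v p.2).val * ((y.v p.1).val + (y.h p.1).val)) +
  ∑ p ∈ Finset.univ.filter (fun p : Fin m × Fin m => p.1 ≤ p.2),
      (y.v p.2).val * (x.h p.1).val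

/-- The multiplication of `Ex_m`:
`(v,h,ε)·(v',h',ε') = (v+v', h+h', ε ε' (−1)^{Σ_{i<j} v_j(v'_i+h'_i) + Σ_{i≤j} v'_j h_i})`. -/
def mul' (x y : Ex m) : Ex m :=
  ⟨x.v + y.v, x.h + y.h, x.ε * y.ε * (-1) ^ expo x y, by
    simp [Finset.sum_add_distrib, x.hv, y.hv]⟩

/-- The identity element `(0, 0, +1)` of `Ex_m`. -/
def one' : Ex m := ⟨0, 0, 1, by simp⟩

/-- The element `(0, 0, −1)` of `Ex_m`. -/
def negOne' : Ex m := ⟨0, 0, -1, by simp⟩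

/-- Inversion in `Ex_m`. -/
def inv' (x : Ex m) : Ex m := ⟨x.v, x.h, x.ε * (-1) ^ expo x x, x.hv⟩

-- auxiliary: the ZMod-2-valued bilinear form underlying `expo`
private def Bf (a b c d : Fin m → ZMod 2) : ZMod 2 :=
  (∑ p ∈ Finset.univ.filter (fun p : Fin m × Fin m => p.1 < p.2),
      a p.2 * (c p.1 + d p.1)) +
  ∑ p ∈ Finset.univ.filter (fun p : Fin m × Fin m => p.1 ≤ p.2),
      c p.2 * b p.1

private def χ (a : ZMod 2) : ℤˣ := (-1) ^ a.val

private lemma χ_add : ∀ a b : ZMod 2, χ (a + b) = χ a * χ b := by decide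

private lemma val_cast : ∀ a : ZMod 2, ((a.val : ℕ) : ZMod 2) = a := by decide

private lemma neg_one_pow_nat (s : ℕ) : ((-1 : ℤˣ)) ^ s = χ ((s : ZMod 2)) := by
  induction s with
  | zero => simp [χ]
  | succ k ih =>
      rw [pow_succ, ih]
      have hc : ((k + 1 : ℕ) : ZMod 2) = ((k : ℕ) : ZMod 2) + 1 := by push_cast; ring
      have hx : ∀ a : ZMod 2, χ (a + 1) = χ a * (-1) := by decide
      rw [hc, hx]

private lemma expo_cast (x y : Ex m) :
    ((expo x y : ℕ) : ZMod 2) = Bf x.v x.h y.v y.h := by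
  unfold expo Bf
  push_cast
  simp [val_cast]

private lemma sign_eq (x y : Ex m) :
    ((-1 : ℤˣ)) ^ expo x y = χ (Bf x.v x.h y.v y.h) := by
  rw [neg_one_pow_nat, expo_cast]

private lemma Bf_add_left (a b a' b' c d : Fin m → ZMod 2) :
    Bf (a + a') (b + b') c d = Bf a b c d + Bf a' b' c d := by
  unfold Bf
  simp only [Pi.add_apply, add_mul, mul_add, Finset.sum_add_distrib]
  ring

private lemma Bf_add_right (a b c d c' d' : Fin m → ZMod 2) :
    Bf a b (c + c') (d + d') = Bf a b c d + Bf a b c' d' := by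
  unfold Bf
  simp only [Pi.add_apply, add_mul, mul_add, Finset.sum_add_distrib]
  ring

private lemma Bf_zero_left (c d : Fin m → ZMod 2) : Bf 0 0 c d = 0 := by
  unfold Bf; simp

private lemma Bf_zero_right (a b : Fin m → ZMod 2) : Bf a b 0 0 = 0 := by
  unfold Bf; simp

instance : Group (Ex m) where
  mul := mul'
  one := one'
  inv := inv'
  mul_assoc a b c := by
    refine Ex.ext ?_ ?_ ?_
    · show (a.v + b.v) + c.v = a.v + (b.v + c.v)
      exact add_assoc _ _ _
    · show (a.h + b.h) + c.h = a.h + (b.h + c.h)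
      exact add_assoc _ _ _
    · show (a.ε * b.ε * (-1) ^ expo a b) * c.ε * (-1) ^ expo (mul' a b) c =
        a.ε * (b.ε * c.ε * (-1) ^ expo b c) * (-1) ^ expo a (mul' b c)
      rw [sign_eq, sign_eq, sign_eq, sign_eq]
      have h1 : (mul' a b).v = a.v + b.v := rfl
      have h2 : (mul' a b).h = a.h + b.h := rfl
      have h3 : (mul' b c).v = b.v + c.v := rfl
      have h4 : (mul' b c).h = b.h + c.h := rfl
      rw [h1, h2, h3, h4, Bf_add_left, Bf_add_right, χ_add, χ_add]
      simp only [mul_assoc, mul_comm, mul_left_comm]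
  one_mul a := by
    refine Ex.ext ?_ ?_ ?_
    · show 0 + a.v = a.v
      exact zero_add _
    · show 0 + a.h = a.h
      exact zero_add _
    · show 1 * a.ε * (-1) ^ expo (one' : Ex m) a = a.ε
      have h0 : expo (one' : Ex m) a = 0 := by simp [expo, one']
      rw [h0]; simp
  mul_one a := by
    refine Ex.ext ?_ ?_ ?_
    · show a.v + 0 = a.v
      exact add_zero _
    · show a.h + 0 = a.h
      exact add_zero _
    · show a.ε * 1 * (-1) ^ expo a (one' : Ex m) = a.ε
      have h0 : expo a (one' : Ex m) = 0 := by simp [expo, one']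
      rw [h0]; simp
  inv_mul_cancel a := by
    refine Ex.ext ?_ ?_ ?_
    · show a.v + a.v = 0
      funext i
      exact CharTwo.add_self_eq_zero _
    · show a.h + a.h = 0
      funext i
      exact CharTwo.add_self_eq_zero _
    · show (a.ε * (-1) ^ expo a a) * a.ε * (-1) ^ expo (inv' a) a = 1
      have he : expo (inv' a) a = expo a a := rfl
      rw [he]
      have h1 : a.ε * a.ε = 1 := Int.units_mul_self a.ε
      have h2 : ((-1 : ℤˣ)) ^ expo a a * (-1) ^ expo a a = 1 :=
        Int.units_mul_self _
      calc (a.ε * (-1) ^ expo a a) * a.ε * (-1) ^ expo a a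
          = (a.ε * a.ε) * ((-1) ^ expo a a * (-1) ^ expo a a) := by
            simp only [mul_assoc, mul_comm, mul_left_comm]
        _ = 1 := by rw [h1, h2, one_mul]

lemma mul_def (x y : Ex m) : x * y = mul' x y := rfl
lemma one_def : (1 : Ex m) = one' := rfl

end Ex


namespace ExCenterAux

open Ex

variable {m : ℕ}

private lemma z2_add_eq_zero : ∀ a b : ZMod 2, a + b = 0 ↔ a = b := by decide

private lemma z2_cases : ∀ a : ZMod 2, a = 0 ∨ a = 1 := by decide

private lemma χinj : ∀ a b : ZMod 2, Ex.χ a = Ex.χ b ↔ a = b := by decide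

private lemma diag_sum (f : Fin m × Fin m → ZMod 2) :
    ∑ p ∈ Finset.univ.filter (fun p : Fin m × Fin m => p.1 = p.2), f p = ∑ i, f (i, i) := by
  rw [Finset.sum_filter, Fintype.sum_prod_type]
  refine Finset.sum_congr rfl fun i _ => ?_
  simp

private lemma le_split (f : Fin m × Fin m → ZMod 2) :
    ∑ p ∈ Finset.univ.filter (fun p : Fin m × Fin m => p.1 ≤ p.2), f p =
    ∑ p ∈ Finset.univ.filter (fun p : Fin m × Fin m => p.1 < p.2), f p + ∑ i, f (i, i) := by
  rw [Finset.sum_filter, Finset.sum_filter, ← diag_sum f, Finset.sum_filter,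
      ← Finset.sum_add_distrib]
  refine Finset.sum_congr rfl fun p _ => ?_
  split_ifs <;> first | omega | simp | (exfalso; omega)

private lemma swap_sum (g : Fin m → Fin m → ZMod 2) :
    ∑ p ∈ Finset.univ.filter (fun p : Fin m × Fin m => p.1 < p.2), g p.1 p.2 =
    ∑ p ∈ Finset.univ.filter (fun p : Fin m × Fin m => p.2 < p.1), g p.2 p.1 := by
  refine Finset.sum_equiv (Equiv.prodComm _ _) (fun p => ?_) (fun p _ => rfl)
  simp

private lemma tri_split (f : Fin m × Fin m → ZMod 2) :
    ∑ p ∈ Finset.univ.filter (fun p : Fin m × Fin m => p.1 < p.2), f p +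
    ∑ p ∈ Finset.univ.filter (fun p : Fin m × Fin m => p.2 < p.1), f p +
    ∑ i, f (i, i) = ∑ p : Fin m × Fin m, f p := by
  rw [Finset.sum_filter, Finset.sum_filter, ← diag_sum f, Finset.sum_filter,
      ← Finset.sum_add_distrib, ← Finset.sum_add_distrib]
  refine Finset.sum_congr rfl fun p _ => ?_
  split_ifs <;> first | omega | simp | (exfalso; omega)

private lemma all_pairs (a c : Fin m → ZMod 2) :
    ∑ p : Fin m × Fin m, a p.2 * c p.1 = (∑ i, a i) * (∑ i, c i) := by
  rw [Fintype.sum_prod_type]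
  rw [Finset.sum_comm]
  rw [Finset.sum_mul]
  refine Finset.sum_congr rfl fun j _ => ?_
  rw [Finset.mul_sum]

/-- The symmetrization of the bilinear form. -/
private lemma Bf_symm (a b c d : Fin m → ZMod 2) :
    Ex.Bf a b c d + Ex.Bf c d a b =
      (∑ i, a i) * (∑ i, c i) + ∑ j, (a j * (c j + d j) + c j * b j) := by
  unfold Ex.Bf
  rw [le_split (fun p => c p.2 * b p.1), le_split (fun p => a p.2 * d p.1)]
  have h1 : ∑ p ∈ Finset.univ.filter (fun p : Fin m × Fin m => p.1 < p.2),
      a p.2 * (c p.1 + d p.1) =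
      (∑ p ∈ Finset.univ.filter (fun p : Fin m × Fin m => p.1 < p.2), a p.2 * c p.1) +
      ∑ p ∈ Finset.univ.filter (fun p : Fin m × Fin m => p.1 < p.2), a p.2 * d p.1 := by
    rw [← Finset.sum_add_distrib]
    exact Finset.sum_congr rfl fun p _ => by ring
  have h2 : ∑ p ∈ Finset.univ.filter (fun p : Fin m × Fin m => p.1 < p.2),
      c p.2 * (a p.1 + b p.1) =
      (∑ p ∈ Finset.univ.filter (fun p : Fin m × Fin m => p.1 < p.2), c p.2 * a p.1) +
      ∑ p ∈ Finset.univ.filter (fun p : Fin m × Fin m => p.1 < p.2), c p.2 * b p.1 := by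
    rw [← Finset.sum_add_distrib]
    exact Finset.sum_congr rfl fun p _ => by ring
  rw [h1, h2]
  have h3 : ∑ p ∈ Finset.univ.filter (fun p : Fin m × Fin m => p.1 < p.2),
      c p.2 * a p.1 =
      ∑ p ∈ Finset.univ.filter (fun p : Fin m × Fin m => p.2 < p.1), a p.2 * c p.1 := by
    rw [swap_sum (fun i j => c j * a i)]
    exact Finset.sum_congr rfl fun p _ => mul_comm _ _
  rw [h3]
  have h4 := tri_split (fun p : Fin m × Fin m => a p.2 * c p.1)
  have h5 := all_pairs a c
  -- abbreviate all sums
  set L := ∑ p ∈ Finset.univ.filter (fun p : Fin m × Fin m => p.1 < p.2), a p.2 * c p.1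
  set G := ∑ p ∈ Finset.univ.filter (fun p : Fin m × Fin m => p.2 < p.1), a p.2 * c p.1
  set D1 := ∑ i : Fin m, a i * c i
  set AD := ∑ p ∈ Finset.univ.filter (fun p : Fin m × Fin m => p.1 < p.2), a p.2 * d p.1
  set CB := ∑ p ∈ Finset.univ.filter (fun p : Fin m × Fin m => p.1 < p.2), c p.2 * b p.1
  set DA := ∑ i : Fin m, a i * d i
  set DB := ∑ i : Fin m, c i * b i
  have hRHS : ∑ j, (a j * (c j + d j) + c j * b j) = D1 + DA + DB := by
    have hp : ∀ j, a j * (c j + d j) + c j * b j =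
        a j * c j + a j * d j + c j * b j := fun j => by ring
    simp only [hp, Finset.sum_add_distrib]
    rfl
  rw [hRHS]
  have hLG : L + G = (∑ i, a i) * (∑ i, c i) + D1 := by
    have : L + G + D1 = (∑ i, a i) * (∑ i, c i) := by rw [h4, h5]
    have h6 : L + G + D1 + D1 = (∑ i, a i) * (∑ i, c i) + D1 := by rw [this]
    calc L + G = L + G + (D1 + D1) := by rw [CharTwo.add_self_eq_zero, add_zero]
      _ = L + G + D1 + D1 := by ring
      _ = _ := h6
  calc L + AD + (CB + DB) + (G + CB + (AD + DA))
      = (L + G) + (AD + AD) + (CB + CB) + (DA + DB) := by ring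
    _ = (L + G) + (DA + DB) := by rw [CharTwo.add_self_eq_zero, CharTwo.add_self_eq_zero]; ring
    _ = (∑ i, a i) * (∑ i, c i) + D1 + (DA + DB) := by rw [hLG]
    _ = _ := by ring

/-- The commuting criterion. -/
private lemma comm_iff (x : Ex m) :
    (∀ y : Ex m, mul' x y = mul' y x) ↔
      ∀ c d : Fin m → ZMod 2, (∑ i, c i) = 0 →
        ∑ j, (x.v j * (c j + d j) + c j * x.h j) = 0 := by
  have key : ∀ (c d : Fin m → ZMod 2) (hc : ∑ i, c i = 0),
      (mul' x ⟨c, d, 1, hc⟩ = mul' ⟨c, d, 1, hc⟩ x ↔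
        ∑ j, (x.v j * (c j + d j) + c j * x.h j) = 0) := by
    intro c d hc
    set y : Ex m := ⟨c, d, 1, hc⟩ with hy
    have hsymm := Bf_symm x.v x.h c d
    rw [x.hv, zero_mul, zero_add] at hsymm
    constructor
    · intro h
      have hε := congrArg Ex.ε h
      simp only [mul', one_mul, mul_one] at hε
      have hε' : ((-1 : ℤˣ)) ^ expo x y = (-1) ^ expo y x := by
        rcases Int.units_eq_one_or x.ε with h1 | h1 <;> rw [h1] at hε <;> simpa using hε
      rw [Ex.sign_eq, Ex.sign_eq, χinj] at hε'
      have : Ex.Bf x.v x.h c d + Ex.Bf c d x.v x.h = 0 := by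
        rw [show y.v = c from rfl, show y.h = d from rfl] at hε'
        rw [hε', CharTwo.add_self_eq_zero]
      rw [hsymm] at this
      exact this
    · intro h
      refine Ex.ext (add_comm _ _) (add_comm _ _) ?_
      show x.ε * y.ε * (-1) ^ expo x y = y.ε * x.ε * (-1) ^ expo y x
      rw [Ex.sign_eq, Ex.sign_eq, mul_comm x.ε y.ε]
      congr 1
      rw [χinj]
      rw [← hsymm] at h
      rw [show y.v = c from rfl, show y.h = d from rfl]
      exact ((z2_add_eq_zero _ _).mp h)
  constructor
  · intro H c d hc
    exact (key c d hc).mp (H _)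
  · intro H y
    have hsymm := Bf_symm x.v x.h y.v y.h
    rw [x.hv, zero_mul, zero_add] at hsymm
    refine Ex.ext (add_comm _ _) (add_comm _ _) ?_
    show x.ε * y.ε * (-1) ^ expo x y = y.ε * x.ε * (-1) ^ expo y x
    rw [Ex.sign_eq, Ex.sign_eq, mul_comm x.ε y.ε]
    congr 1
    rw [χinj]
    have h := H y.v y.h y.hv
    rw [← hsymm] at h
    exact ((z2_add_eq_zero _ _).mp h)

end ExCenterAux

open Ex ExCenterAux in
/-- For every positive integer `m`, the centre of the group
`Ex_m` is exactly `{(0,0,+1), (0,0,−1), (0,𝟙,+1), (0,𝟙,−1)}`, where `𝟙` is the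
all-ones vector in `(ℤ/2ℤ)^m`. -/
theorem ex_center (m : ℕ) (hm : 0 < m) (x : Ex m) :
    (∀ y : Ex m, mul' x y = mul' y x) ↔
      (x = ⟨0, 0, 1, by simp⟩ ∨ x = ⟨0, 0, -1, by simp⟩ ∨
        x = ⟨0, (fun _ => 1), 1, by simp⟩ ∨ x = ⟨0, (fun _ => 1), -1, by simp⟩) := by
  rw [ExCenterAux.comm_iff]
  constructor
  · intro H
    -- step 1 : x.v = 0
    have hv0 : x.v = 0 := by
      funext k
      have h := H 0 (Pi.single k 1) (by simp)
      simpa [Pi.single_apply, mul_ite, Finset.sum_ite_eq'] using h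
    -- step 2 : x.h is constant
    have hconst : ∀ k l : Fin m, x.h k = x.h l := by
      intro k l
      have h := H (Pi.single k 1 + Pi.single l 1) 0 (by
        simp [Finset.sum_add_distrib, Pi.single_apply, Finset.sum_ite_eq',
          CharTwo.add_self_eq_zero])
      rw [hv0] at h
      simp only [Pi.zero_apply, zero_mul, zero_add, Pi.add_apply, add_mul,
        Finset.sum_add_distrib, Pi.single_apply, ite_mul, one_mul, zero_mul,
        Finset.sum_ite_eq'] at h
      simp only [Finset.mem_univ, if_true] at h
      exact (ExCenterAux.z2_add_eq_zero _ _).mp h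
    set k0 : Fin m := ⟨0, hm⟩
    have hh : x.h = fun _ => x.h k0 := funext fun l => hconst l k0
    rcases ExCenterAux.z2_cases (x.h k0) with h0 | h1
    · rcases Int.units_eq_one_or x.ε with he | he
      · left; refine Ex.ext hv0 ?_ he
        rw [hh, h0]; rfl
      · right; left; refine Ex.ext hv0 ?_ he
        rw [hh, h0]; rfl
    · rcases Int.units_eq_one_or x.ε with he | he
      · right; right; left; exact Ex.ext hv0 (by rw [hh, h1]) he
      · right; right; right; exact Ex.ext hv0 (by rw [hh, h1]) he
  · intro H c d hc
    have hv0 : x.v = 0 ∧ (x.h = 0 ∨ x.h = fun _ => 1) := by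
      rcases H with h | h | h | h <;> rw [h] <;> simp
    obtain ⟨hv0, hh⟩ := hv0
    rw [hv0]
    rcases hh with hh | hh <;> rw [hh] <;>
      simp [← Finset.sum_mul, Finset.sum_comm, hc, ← Finset.mul_sum]
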